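/- If G is a position of an LR-ending partisan game with G = conj(G) (for instance G = {*L, *R}), then for every position G', the sum G + G' is not equivalent to *L. Hence G has no additive inverse in the monoid of game values, and this monoid is not a group. -/

import Mathlib

/-- Positions of LR-ending partisan games: two terminals and finite option sets
(represented as lists; set-like behavior is captured by the `Iso` relation). -/
inductive Pos : Type
  | termL : Pos
  | termR : Pos
  | opts : List Pos → Pos

namespace Pos

/-- Valid positions: every non-terminal position has a nonempty set of options. -/
inductive Valid : Pos → Prop
  | termL : Valid termL
  | termR : Valid termR
  | opts : ∀ gs : List Pos, gs ≠ [] → (∀ g ∈ gs, Valid g) → Valid (opts gs)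

/-- Disjunctive sum. -/
def sum : Pos → Pos → Pos
  | termL, termL => termL
  | termL, termR => termR
  | termR, termL => termR
  | termR, termR => termL
  | termL, opts hs => opts (hs.attach.map (fun h => sum termL h.1))
  | termR, opts hs => opts (hs.attach.map (fun h => sum termR h.1))
  | opts gs, termL => opts (gs.attach.map (fun g => sum g.1 termL))
  | opts gs, termR => opts (gs.attach.map (fun g => sum g.1 termR))
  | opts gs, opts hs =>
      opts (gs.attach.map (fun g => sum g.1 (opts hs)) ++
            hs.attach.map (fun h => sum (opts gs) h.1))
termination_by g h => sizeOf g + sizeOf h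
decreasing_by
  all_goals
    first
      | (have := List.sizeOf_lt_of_mem h.2; simp_all; omega)
      | (have := List.sizeOf_lt_of_mem g.2; simp_all; omega)

/-- Conjugate: swap the two kinds of terminal positions. -/
def conj : Pos → Pos
  | termL => termR
  | termR => termL
  | opts gs => opts (gs.attach.map (fun g => conj g.1))
decreasing_by
  have := List.sizeOf_lt_of_mem g.2; simp_all; omega

/-- Isomorphism of game trees (positions viewed as sets of options). -/
def Iso : Pos → Pos → Prop
  | termL, termL => True
  | termR, termR => True
  | opts gs, opts hs =>
      (∀ g ∈ gs.attach, ∃ h ∈ hs.attach, Iso g.1 h.1) ∧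
      (∀ h ∈ hs.attach, ∃ g ∈ gs.attach, Iso g.1 h.1)
  | _, _ => False
termination_by g h => sizeOf g + sizeOf h
decreasing_by
  all_goals
    (have hg := List.sizeOf_lt_of_mem g.2; have hh := List.sizeOf_lt_of_mem h.2;
     simp_all; omega)

inductive Player : Type
  | left : Player
  | right : Player
  deriving DecidableEq

/-- `Wins p b G` : player `p` has a winning strategy from position `G`,
where `b = true` means it is `p`'s turn to move and `b = false` means the
opponent is to move.  A terminal position is won by the player given by
its label, regardless of whose turn it is. -/
inductive Wins : Player → Bool → Pos → Prop
  | termL : ∀ b, Wins Player.left b termL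
  | termR : ∀ b, Wins Player.right b termR
  | move : ∀ (p : Player) (gs : List Pos) (g : Pos), g ∈ gs →
      Wins p false g → Wins p true (opts gs)
  | wait : ∀ (p : Player) (gs : List Pos),
      (∀ g, g ∈ gs → Wins p true g) → Wins p false (opts gs)

inductive Outcome : Type
  | L : Outcome
  | R : Outcome
  | N : Outcome
  | P : Outcome
  deriving DecidableEq

/-- The outcome of a position. -/
noncomputable def outcome (G : Pos) : Outcome := by
  classical
  exact
    if Wins Player.left true G then
      if Wins Player.left false G then Outcome.L else Outcome.N
    else
      if Wins Player.left false G then Outcome.P else Outcome.R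

/-- Equivalence of positions: the outcome agrees in every (valid) context. -/
def equiv (G H : Pos) : Prop :=
  ∀ X : Pos, Valid X → outcome (sum G X) = outcome (sum H X)


/-! ### Unfolding lemmas (attach → map) -/

theorem conj_termL : conj termL = termR := by rw [conj]
theorem conj_termR : conj termR = termL := by rw [conj]
theorem conj_opts (gs : List Pos) : conj (opts gs) = opts (gs.map conj) := by
  rw [conj]; simp

theorem sum_termL_termL : sum termL termL = termL := by rw [sum]
theorem sum_termL_termR : sum termL termR = termR := by rw [sum]
theorem sum_termR_termL : sum termR termL = termR := by rw [sum]
theorem sum_termR_termR : sum termR termR = termL := by rw [sum]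

theorem sum_termL_opts (hs : List Pos) :
    sum termL (opts hs) = opts (hs.map (fun h => sum termL h)) := by
  rw [sum]; simp

theorem sum_termR_opts (hs : List Pos) :
    sum termR (opts hs) = opts (hs.map (fun h => sum termR h)) := by
  rw [sum]; simp

theorem sum_opts_termL (gs : List Pos) :
    sum (opts gs) termL = opts (gs.map (fun g => sum g termL)) := by
  rw [sum]; simp

theorem sum_opts_termR (gs : List Pos) :
    sum (opts gs) termR = opts (gs.map (fun g => sum g termR)) := by
  rw [sum]; simp

theorem sum_opts_opts (gs hs : List Pos) :
    sum (opts gs) (opts hs) =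
      opts (gs.map (fun g => sum g (opts hs)) ++ hs.map (fun h => sum (opts gs) h)) := by
  rw [sum]; simp

theorem iso_opts_iff (gs hs : List Pos) :
    Iso (opts gs) (opts hs) ↔
      (∀ g ∈ gs, ∃ h ∈ hs, Iso g h) ∧ (∀ h ∈ hs, ∃ g ∈ gs, Iso g h) := by
  rw [Iso]; simp

theorem not_iso_termL_opts (hs : List Pos) : ¬ Iso termL (opts hs) := by
  simp [Iso]
theorem not_iso_termR_opts (hs : List Pos) : ¬ Iso termR (opts hs) := by
  simp [Iso]
theorem not_iso_opts_termL (gs : List Pos) : ¬ Iso (opts gs) termL := by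
  simp [Iso]
theorem not_iso_opts_termR (gs : List Pos) : ¬ Iso (opts gs) termR := by
  simp [Iso]
theorem not_iso_termL_termR : ¬ Iso termL termR := by
  simp [Iso]
theorem not_iso_termR_termL : ¬ Iso termR termL := by
  simp [Iso]

/-! ### Basic Iso facts -/

theorem iso_refl : ∀ A : Pos, Iso A A
  | termL => by rw [Iso]; trivial
  | termR => by rw [Iso]; trivial
  | opts gs => by
      rw [Iso]
      refine ⟨fun g hg => ⟨g, hg, iso_refl g.1⟩, fun h hh => ⟨h, hh, iso_refl h.1⟩⟩
termination_by A => sizeOf A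
decreasing_by
  all_goals first
    | (have := List.sizeOf_lt_of_mem g.2; simp_all; omega)
    | (have := List.sizeOf_lt_of_mem h.2; simp_all; omega)

theorem iso_symm : ∀ A B : Pos, Iso A B → Iso B A
  | termL, termL, _ => by rw [Iso]; trivial
  | termR, termR, _ => by rw [Iso]; trivial
  | termL, termR, h => absurd h not_iso_termL_termR
  | termR, termL, h => absurd h not_iso_termR_termL
  | termL, opts hs, h => absurd h (not_iso_termL_opts hs)
  | termR, opts hs, h => absurd h (not_iso_termR_opts hs)
  | opts gs, termL, h => absurd h (not_iso_opts_termL gs)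
  | opts gs, termR, h => absurd h (not_iso_opts_termR gs)
  | opts gs, opts hs, h => by
      rw [iso_opts_iff] at h ⊢
      refine ⟨fun b hb => ?_, fun a ha => ?_⟩
      · obtain ⟨a, ha, hab⟩ := h.2 b hb
        exact ⟨a, ha, iso_symm a b hab⟩
      · obtain ⟨b, hb, hab⟩ := h.1 a ha
        exact ⟨b, hb, iso_symm a b hab⟩
termination_by A B => sizeOf A + sizeOf B
decreasing_by
  all_goals
    (have h1 := List.sizeOf_lt_of_mem ha; have h2 := List.sizeOf_lt_of_mem hb;
     simp_all; omega)

/-! ### conj is an involution, and interacts with sum -/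

theorem conj_conj : ∀ A : Pos, conj (conj A) = A
  | termL => by rw [conj_termL, conj_termR]
  | termR => by rw [conj_termR, conj_termL]
  | opts gs => by
      rw [conj_opts, conj_opts, List.map_map]
      congr 1
      have : ∀ g ∈ gs, (conj ∘ conj) g = id g := fun g hg => conj_conj g
      rw [List.map_congr_left this, List.map_id]
termination_by A => sizeOf A
decreasing_by
  have := List.sizeOf_lt_of_mem hg; simp_all; omega

theorem conj_sum : ∀ A B : Pos, conj (sum A B) = sum (conj A) B
  | termL, termL => by rw [sum_termL_termL, conj_termL, sum_termR_termL]
  | termL, termR => by rw [sum_termL_termR, conj_termR, conj_termL, sum_termR_termR]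
  | termR, termL => by rw [sum_termR_termL, conj_termR, sum_termL_termL]
  | termR, termR => by rw [sum_termR_termR, conj_termL, conj_termR, sum_termL_termR]
  | termL, opts hs => by
      rw [sum_termL_opts, conj_opts, List.map_map, conj_termL, sum_termR_opts]
      congr 1
      refine List.map_congr_left fun h hh => ?_
      show conj (sum termL h) = sum termR h
      rw [conj_sum termL h, conj_termL]
  | termR, opts hs => by
      rw [sum_termR_opts, conj_opts, List.map_map, conj_termR, sum_termL_opts]
      congr 1
      refine List.map_congr_left fun h hh => ?_
      show conj (sum termR h) = sum termL h
      rw [conj_sum termR h, conj_termR]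
  | opts gs, termL => by
      rw [sum_opts_termL, conj_opts, List.map_map, conj_opts, sum_opts_termL, List.map_map]
      congr 1
      refine List.map_congr_left fun g hg => ?_
      show conj (sum g termL) = sum (conj g) termL
      exact conj_sum g termL
  | opts gs, termR => by
      rw [sum_opts_termR, conj_opts, List.map_map, conj_opts, sum_opts_termR, List.map_map]
      congr 1
      refine List.map_congr_left fun g hg => ?_
      show conj (sum g termR) = sum (conj g) termR
      exact conj_sum g termR
  | opts gs, opts hs => by
      rw [sum_opts_opts, conj_opts, List.map_append, List.map_map, List.map_map,
        conj_opts, sum_opts_opts, List.map_map]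
      congr 1
      congr 1
      · refine List.map_congr_left fun g hg => ?_
        show conj (sum g (opts hs)) = sum (conj g) (opts hs)
        exact conj_sum g (opts hs)
      · refine List.map_congr_left fun h hh => ?_
        show conj (sum (opts gs) h) = sum (opts (gs.map conj)) h
        rw [conj_sum (opts gs) h, conj_opts]
termination_by A B => sizeOf A + sizeOf B
decreasing_by
  all_goals first
    | (have := List.sizeOf_lt_of_mem hg; simp_all; omega)
    | (have := List.sizeOf_lt_of_mem hh; simp_all; omega)
    | (simp_all; omega)


/-! ### Wins respects Iso -/

theorem wins_iso : ∀ A B : Pos, Iso A B → ∀ p b, Wins p b A → Wins p b B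
  | termL, termL, _, _, _, w => w
  | termR, termR, _, _, _, w => w
  | termL, termR, h, _, _, _ => absurd h not_iso_termL_termR
  | termR, termL, h, _, _, _ => absurd h not_iso_termR_termL
  | termL, opts hs, h, _, _, _ => absurd h (not_iso_termL_opts hs)
  | termR, opts hs, h, _, _, _ => absurd h (not_iso_termR_opts hs)
  | opts gs, termL, h, _, _, _ => absurd h (not_iso_opts_termL gs)
  | opts gs, termR, h, _, _, _ => absurd h (not_iso_opts_termR gs)
  | opts gs, opts hs, hiso, p, b, w => by
      rw [iso_opts_iff] at hiso
      cases w with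
      | move _ _ g hg hw =>
          obtain ⟨h, hh, hgh⟩ := hiso.1 g hg
          exact Wins.move p hs h hh (wins_iso g h hgh p false hw)
      | wait _ _ hall =>
          refine Wins.wait p hs fun h hh => ?_
          obtain ⟨g, hg, hgh⟩ := hiso.2 h hh
          exact wins_iso g h hgh p true (hall g hg)
termination_by A B => sizeOf A + sizeOf B
decreasing_by
  all_goals
    (have h1 := List.sizeOf_lt_of_mem hg; have h2 := List.sizeOf_lt_of_mem hh;
     simp_all; omega)

/-! ### Mirror symmetry -/

def swap : Player → Player
  | Player.left => Player.right
  | Player.right => Player.left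

theorem swap_swap (p : Player) : swap (swap p) = p := by cases p <;> rfl

theorem wins_conj {p : Player} {b : Bool} {A : Pos} (w : Wins p b A) :
    Wins (swap p) b (conj A) := by
  induction w with
  | termL b => rw [conj_termL]; exact Wins.termR b
  | termR b => rw [conj_termR]; exact Wins.termL b
  | move p gs g hg hw ih =>
      rw [conj_opts]
      exact Wins.move _ _ (conj g) (List.mem_map_of_mem (f := conj) hg) ih
  | wait p gs hall ih =>
      rw [conj_opts]
      refine Wins.wait _ _ fun g' hg' => ?_
      obtain ⟨g, hg, rfl⟩ := List.mem_map.mp hg'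
      exact ih g hg

theorem wins_conj_iff {p : Player} {b : Bool} {A : Pos} :
    Wins p b (conj A) ↔ Wins (swap p) b A := by
  constructor
  · intro w
    have := wins_conj w
    rwa [conj_conj] at this
  · intro w
    have := wins_conj w
    rwa [swap_swap] at this

/-! ### Determinacy: both players cannot win a valid position -/

theorem not_both : ∀ A : Pos, Valid A → ∀ p q : Player, p ≠ q →
    Wins p true A → Wins q false A → False
  | termL, _, p, q, hpq, wp, wq => by cases wp; cases wq; exact hpq rfl
  | termR, _, p, q, hpq, wp, wq => by cases wp; cases wq; exact hpq rfl
  | opts gs, hv, p, q, hpq, wp, wq => by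
      cases wp with
      | move _ _ g hg hw =>
          cases wq with
          | wait _ _ hall =>
              cases hv with
              | opts _ _ hvall =>
                  exact not_both g (hvall g hg) q p (Ne.symm hpq) (hall g hg) hw
termination_by A => sizeOf A
decreasing_by
  have := List.sizeOf_lt_of_mem hg; simp_all; omega

/-! ### Validity of sums -/

set_option maxHeartbeats 2000000 in
theorem valid_sum : ∀ A B : Pos, Valid A → Valid B → Valid (sum A B)
  | termL, termL, _, _ => by rw [sum_termL_termL]; exact Valid.termL
  | termL, termR, _, _ => by rw [sum_termL_termR]; exact Valid.termR
  | termR, termL, _, _ => by rw [sum_termR_termL]; exact Valid.termR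
  | termR, termR, _, _ => by rw [sum_termR_termR]; exact Valid.termL
  | termL, opts hs, _, hB => by
      rw [sum_termL_opts]
      cases hB with
      | opts _ hne hall =>
          refine Valid.opts _ (by simpa using hne) fun x hx => ?_
          obtain ⟨h, hh, rfl⟩ := List.mem_map.mp hx
          exact valid_sum termL h Valid.termL (hall h hh)
  | termR, opts hs, _, hB => by
      rw [sum_termR_opts]
      cases hB with
      | opts _ hne hall =>
          refine Valid.opts _ (by simpa using hne) fun x hx => ?_
          obtain ⟨h, hh, rfl⟩ := List.mem_map.mp hx
          exact valid_sum termR h Valid.termR (hall h hh)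
  | opts gs, termL, hA, _ => by
      rw [sum_opts_termL]
      cases hA with
      | opts _ hne hall =>
          refine Valid.opts _ (by simpa using hne) fun x hx => ?_
          obtain ⟨g, hg, rfl⟩ := List.mem_map.mp hx
          exact valid_sum g termL (hall g hg) Valid.termL
  | opts gs, termR, hA, _ => by
      rw [sum_opts_termR]
      cases hA with
      | opts _ hne hall =>
          refine Valid.opts _ (by simpa using hne) fun x hx => ?_
          obtain ⟨g, hg, rfl⟩ := List.mem_map.mp hx
          exact valid_sum g termR (hall g hg) Valid.termR
  | opts gs, opts hs, hA, hB => by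
      rw [sum_opts_opts]
      cases hA with
      | opts _ hneg hallg =>
          cases hB with
          | opts _ hneh hallh =>
              refine Valid.opts _ ?_ fun x hx => ?_
              · simp [hneg]
              · rcases List.mem_append.mp hx with hx | hx
                · obtain ⟨g, hg, rfl⟩ := List.mem_map.mp hx
                  exact valid_sum g (opts hs) (hallg g hg) (Valid.opts hs hneh hallh)
                · obtain ⟨h, hh, rfl⟩ := List.mem_map.mp hx
                  exact valid_sum (opts gs) h (Valid.opts gs hneg hallg) (hallh h hh)
termination_by A B => sizeOf A + sizeOf B
decreasing_by
  all_goals first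
    | (have := List.sizeOf_lt_of_mem hg; simp_all; omega)
    | (have := List.sizeOf_lt_of_mem hh; simp_all; omega)
    | (simp_all; omega)

/-! ### Adding termL changes nothing -/

theorem wins_sum_termL : ∀ (A : Pos) (p : Player) (b : Bool),
    Wins p b (sum A termL) ↔ Wins p b A
  | termL, p, b => by rw [sum_termL_termL]
  | termR, p, b => by rw [sum_termR_termL]
  | opts gs, p, b => by
      rw [sum_opts_termL]
      constructor
      · intro w
        cases w with
        | move _ _ g' hg' hw =>
            obtain ⟨g, hg, rfl⟩ := List.mem_map.mp hg'
            exact Wins.move p gs g hg ((wins_sum_termL g p false).mp hw)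
        | wait _ _ hall =>
            refine Wins.wait p gs fun g hg => ?_
            exact (wins_sum_termL g p true).mp (hall _ (List.mem_map_of_mem hg))
      · intro w
        cases w with
        | move _ _ g hg hw =>
            exact Wins.move p _ (sum g termL) (List.mem_map_of_mem hg)
              ((wins_sum_termL g p false).mpr hw)
        | wait _ _ hall =>
            refine Wins.wait p _ fun x hx => ?_
            obtain ⟨g, hg, rfl⟩ := List.mem_map.mp hx
            exact (wins_sum_termL g p true).mpr (hall g hg)
termination_by A => sizeOf A
decreasing_by
  all_goals (have := List.sizeOf_lt_of_mem hg; simp_all; omega)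

/-! ### Outcome lemmas -/

theorem outcome_congr {A B : Pos} (h : ∀ p b, Wins p b A ↔ Wins p b B) :
    outcome A = outcome B := by
  have e1 := propext (h Player.left true)
  have e2 := propext (h Player.left false)
  unfold outcome
  rw [e1, e2]

theorem outcome_termL : outcome termL = Outcome.L := by
  unfold outcome
  rw [if_pos (Wins.termL true), if_pos (Wins.termL false)]


/-! ### Sum congruence on the left -/

theorem sum_congr_left : ∀ A A' B : Pos, Iso A A' → Iso (sum A B) (sum A' B)
  | termL, termL, _, _ => iso_refl _
  | termR, termR, _, _ => iso_refl _
  | termL, termR, _, h => absurd h not_iso_termL_termR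
  | termR, termL, _, h => absurd h not_iso_termR_termL
  | termL, opts hs, _, h => absurd h (not_iso_termL_opts hs)
  | termR, opts hs, _, h => absurd h (not_iso_termR_opts hs)
  | opts gs, termL, _, h => absurd h (not_iso_opts_termL gs)
  | opts gs, termR, _, h => absurd h (not_iso_opts_termR gs)
  | opts gs, opts gs', termL, h => by
      rw [sum_opts_termL, sum_opts_termL, iso_opts_iff]
      rw [iso_opts_iff] at h
      constructor
      · intro x hx
        obtain ⟨g, hg, rfl⟩ := List.mem_map.mp hx
        obtain ⟨g', hg', hgg'⟩ := h.1 g hg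
        exact ⟨sum g' termL, List.mem_map_of_mem hg', sum_congr_left g g' termL hgg'⟩
      · intro x hx
        obtain ⟨g', hg', rfl⟩ := List.mem_map.mp hx
        obtain ⟨g, hg, hgg'⟩ := h.2 g' hg'
        exact ⟨sum g termL, List.mem_map_of_mem hg, sum_congr_left g g' termL hgg'⟩
  | opts gs, opts gs', termR, h => by
      rw [sum_opts_termR, sum_opts_termR, iso_opts_iff]
      rw [iso_opts_iff] at h
      constructor
      · intro x hx
        obtain ⟨g, hg, rfl⟩ := List.mem_map.mp hx
        obtain ⟨g', hg', hgg'⟩ := h.1 g hg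
        exact ⟨sum g' termR, List.mem_map_of_mem hg', sum_congr_left g g' termR hgg'⟩
      · intro x hx
        obtain ⟨g', hg', rfl⟩ := List.mem_map.mp hx
        obtain ⟨g, hg, hgg'⟩ := h.2 g' hg'
        exact ⟨sum g termR, List.mem_map_of_mem hg, sum_congr_left g g' termR hgg'⟩
  | opts gs, opts gs', opts hs, h => by
      rw [sum_opts_opts, sum_opts_opts, iso_opts_iff]
      have h' := h
      rw [iso_opts_iff] at h'
      constructor
      · intro x hx
        rcases List.mem_append.mp hx with hx | hx
        · obtain ⟨g, hg, rfl⟩ := List.mem_map.mp hx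
          obtain ⟨g', hg', hgg'⟩ := h'.1 g hg
          exact ⟨sum g' (opts hs),
            List.mem_append.mpr (Or.inl (List.mem_map_of_mem hg')),
            sum_congr_left g g' (opts hs) hgg'⟩
        · obtain ⟨k, hk, rfl⟩ := List.mem_map.mp hx
          exact ⟨sum (opts gs') k,
            List.mem_append.mpr (Or.inr (List.mem_map_of_mem hk)),
            sum_congr_left (opts gs) (opts gs') k h⟩
      · intro x hx
        rcases List.mem_append.mp hx with hx | hx
        · obtain ⟨g', hg', rfl⟩ := List.mem_map.mp hx
          obtain ⟨g, hg, hgg'⟩ := h'.2 g' hg'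
          exact ⟨sum g (opts hs),
            List.mem_append.mpr (Or.inl (List.mem_map_of_mem hg)),
            sum_congr_left g g' (opts hs) hgg'⟩
        · obtain ⟨k, hk, rfl⟩ := List.mem_map.mp hx
          exact ⟨sum (opts gs) k,
            List.mem_append.mpr (Or.inr (List.mem_map_of_mem hk)),
            sum_congr_left (opts gs) (opts gs') k h⟩
termination_by A A' B => sizeOf A + sizeOf A' + sizeOf B
decreasing_by
  all_goals first
    | (have h1 := List.sizeOf_lt_of_mem hg; have h2 := List.sizeOf_lt_of_mem hg';
       simp_all; omega)
    | (have h1 := List.sizeOf_lt_of_mem hk; simp_all; omega)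
    | (simp_all; omega)

end Pos

/-- a self-conjugate position (such as `{*L, *R}`) has no additive
inverse: for every position `G'`, the sum `G + G'` is not equivalent to `*L`
(the identity of the monoid of game values); hence the monoid is not a group. -/
theorem no_inverse_of_selfConjugate :
    (∀ G : Pos, G.Valid → Pos.Iso G G.conj →
      ∀ G' : Pos, G'.Valid → ¬ Pos.equiv (Pos.sum G G') Pos.termL) ∧
    Pos.Iso (Pos.opts [Pos.termL, Pos.termR]) (Pos.opts [Pos.termL, Pos.termR]).conj := by
  open Pos in
  constructor
  · intro G hG hGc G' hG' heq
    set S := Pos.sum G G' with hS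
    have hSvalid : Valid S := valid_sum G G' hG hG'
    -- `S` has outcome `L` by the equivalence hypothesis
    have h1 : outcome (Pos.sum S termL) = outcome (Pos.sum termL termL) :=
      heq termL Valid.termL
    rw [sum_termL_termL, outcome_termL] at h1
    have hSL : outcome S = Outcome.L := by
      rw [← h1]
      exact (outcome_congr fun p b => wins_sum_termL S p b).symm
    have wL : Wins Player.left true S ∧ Wins Player.left false S := by
      by_cases a : Wins Player.left true S <;> by_cases c : Wins Player.left false S <;>
        [skip; skip; skip; skip] <;>
        first
          | exact ⟨a, c⟩
          | (exfalso; unfold outcome at hSL; simp [a, c] at hSL)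
    -- `S` is self-conjugate
    have hiso : Iso (conj S) S := by
      rw [hS, conj_sum]
      exact sum_congr_left (conj G) G G' (iso_symm G (conj G) hGc)
    -- so Right also wins `S` moving second
    have wr : Wins Player.right false S := by
      have hc : Wins (swap Player.left) false (conj S) := wins_conj wL.2
      exact wins_iso (conj S) S hiso Player.right false hc
    exact not_both S hSvalid Player.left Player.right (by simp) wL.1 wr
  · rw [conj_opts]
    simp only [List.map_cons, List.map_nil, conj_termL, conj_termR]
    rw [iso_opts_iff]
    constructor
    · intro g hg
      rcases List.mem_cons.mp hg with rfl | hg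
      · exact ⟨termL, by simp, iso_refl _⟩
      · rcases List.mem_cons.mp hg with rfl | hg
        · exact ⟨termR, by simp, iso_refl _⟩
        · simp at hg
    · intro h hh
      rcases List.mem_cons.mp hh with rfl | hh
      · exact ⟨termR, by simp, iso_refl _⟩
      · rcases List.mem_cons.mp hh with rfl | hh
        · exact ⟨termL, by simp, iso_refl _⟩
        · simp at hh
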